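/- Let Z be a multi-type branching process with type set 𝒯, offspring distribution p, and mean offspring matrix M, satisfying (⋆) and (P). Let a⋆ ∈ 𝒯 and I ⊂ 𝒯 \ {a⋆}, assume Z_0 = e_{a⋆}, and let λ : 𝒯 → ℕ satisfy λ(a⋆) = 1 and P(Z survives | Z_0 = e_a) ≤ P(Z survives | Z_0 = λ(a)·e_{a⋆}) for all a ∈ 𝒯. If Σ_{a ∉ I} M(a⋆, a)·λ(a) + Σ_{a ∈ I} Σ_{b ∈ 𝒯} M(a⋆, a)·M(a, b)·λ(b) < 1, then Z goes extinct almost surely. -/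

import Mathlib

open scoped ENNReal

section MTBP

variable {T : Type*} [Fintype T] [DecidableEq T]

/-- Convolution (law of an independent sum) of two population distributions. -/
noncomputable def addPMF (μ ν : PMF (T → ℕ)) : PMF (T → ℕ) :=
  μ.bind fun x => ν.map fun y => x + y

/-- Law of the sum of `n` i.i.d. populations with common law `μ`. -/
noncomputable def iidSum (μ : PMF (T → ℕ)) : ℕ → PMF (T → ℕ)
  | 0 => PMF.pure 0
  | n + 1 => addPMF μ (iidSum μ n)

/-- One generation of the multi-type branching process with offspring
distribution `p`: each of the `η a` individuals of each type `a` is replaced,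
independently, by a population sampled from `p a`. -/
noncomputable def branchStep (p : T → PMF (T → ℕ)) (η : T → ℕ) : PMF (T → ℕ) :=
  (Finset.univ : Finset T).toList.foldr
    (fun a acc => addPMF (iidSum (p a) (η a)) acc) (PMF.pure 0)

/-- The law of generation `n` of the multi-type branching process with offspring
distribution `p` started from the deterministic population `η`. -/
noncomputable def gen (p : T → PMF (T → ℕ)) (η : T → ℕ) : ℕ → PMF (T → ℕ)
  | 0 => PMF.pure η
  | n + 1 => (gen p η n).bind (branchStep p)

/-- The extinction probability of the multi-type branching process started from `η`.
Since `0` is absorbing, the events `{Z_n = 0}` increase, and the probability of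
extinction equals `⨆ n, P(Z_n = 0)`. -/
noncomputable def extinctionProb (p : T → PMF (T → ℕ)) (η : T → ℕ) : ℝ≥0∞ :=
  ⨆ n : ℕ, gen p η n 0

/-- The survival probability `P(Z survives ∣ Z_0 = η)`. -/
noncomputable def survivalProb (p : T → PMF (T → ℕ)) (η : T → ℕ) : ℝ≥0∞ :=
  1 - extinctionProb p η

/-- `e_a`, the population consisting of a single individual of type `a`. -/
def single (a : T) : T → ℕ := fun b => if b = a then 1 else 0

end MTBP

section MeanMatrix

variable {T : Type*} [Fintype T] [DecidableEq T]

/-- The mean offspring matrix `M(a,b) = E[Z_1(b) ∣ Z_0 = e_a]`. -/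
noncomputable def meanMatrix (p : T → PMF (T → ℕ)) : Matrix T T ℝ≥0∞ :=
  Matrix.of fun a b => ∑' η : T → ℕ, p a η * (η b : ℝ≥0∞)

/-- Condition (⋆): some type has positive probability of producing a population with
more than one individual. -/
def CondStar (p : T → PMF (T → ℕ)) : Prop :=
  ∃ (a : T) (η : T → ℕ), p a η ≠ 0 ∧ 1 < ∑ b : T, η b

/-- Condition (P): some power of the mean offspring matrix has all entries positive. -/
def CondPos (p : T → PMF (T → ℕ)) : Prop :=
  ∃ n : ℕ, ∀ a b : T, 0 < ((meanMatrix p) ^ n) a b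

end MeanMatrix

section Aux
variable {T : Type*} [Fintype T] [DecidableEq T]
set_option linter.unusedSectionVars false

lemma addPMF_def (μ ν : PMF (T → ℕ)) :
    addPMF μ ν = μ.bind fun x => ν.bind fun y => PMF.pure (x + y) := rfl

lemma addPMF_assoc (μ ν ρ : PMF (T → ℕ)) :
    addPMF (addPMF μ ν) ρ = addPMF μ (addPMF ν ρ) := by
  simp only [addPMF_def, PMF.bind_bind, PMF.pure_bind, add_assoc]

lemma addPMF_comm (μ ν : PMF (T → ℕ)) : addPMF μ ν = addPMF ν μ := by
  rw [addPMF_def, addPMF_def, PMF.bind_comm]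
  simp only [add_comm]

lemma addPMF_one_mul (ν : PMF (T → ℕ)) : addPMF (PMF.pure 0) ν = ν := by
  simp [addPMF_def, PMF.pure_bind, zero_add, PMF.bind_pure]

lemma addPMF_mul_one (μ : PMF (T → ℕ)) : addPMF μ (PMF.pure 0) = μ := by
  simp [addPMF_def, PMF.pure_bind, add_zero, PMF.bind_pure]

noncomputable instance instCMPMF : CommMonoid (PMF (T → ℕ)) where
  mul := addPMF
  one := PMF.pure 0
  mul_assoc := addPMF_assoc
  one_mul := addPMF_one_mul
  mul_one := addPMF_mul_one
  mul_comm := addPMF_comm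

lemma mul_def (μ ν : PMF (T → ℕ)) : μ * ν = addPMF μ ν := rfl

lemma one_def : (1 : PMF (T → ℕ)) = PMF.pure 0 := rfl


set_option linter.unusedSectionVars false

lemma iidSum_eq_pow (μ : PMF (T → ℕ)) (n : ℕ) : iidSum μ n = μ ^ n := by
  induction n with
  | zero => rfl
  | succ n ih =>
    show addPMF μ (iidSum μ n) = μ ^ (n + 1)
    rw [ih, pow_succ, mul_comm]; rfl

lemma branchStep_eq (p : T → PMF (T → ℕ)) (η : T → ℕ) :
    branchStep p η = ∏ a : T, p a ^ η a := by
  rw [branchStep]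
  have h : ∀ l : List T,
      l.foldr (fun a acc => addPMF (iidSum (p a) (η a)) acc) (PMF.pure 0)
        = (l.map fun a => p a ^ η a).prod := by
    intro l
    induction l with
    | nil => rfl
    | cons a l ih =>
      rw [List.foldr_cons, ih, iidSum_eq_pow, List.map_cons, List.prod_cons]
      rfl
  rw [h, ← Multiset.prod_coe, ← Multiset.map_coe, Finset.coe_toList,
    ← Finset.prod_eq_multiset_prod]

lemma branchStep_zero (p : T → PMF (T → ℕ)) : branchStep p 0 = 1 := by
  simp [branchStep_eq]

lemma branchStep_single (p : T → PMF (T → ℕ)) (a : T) :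
    branchStep p (single a) = p a := by
  rw [branchStep_eq]
  rw [Finset.prod_eq_single a]
  · simp [single]
  · intro b _ hb; simp [single, hb]
  · simp

lemma branchStep_add (p : T → PMF (T → ℕ)) (η ξ : T → ℕ) :
    branchStep p (η + ξ) = branchStep p η * branchStep p ξ := by
  simp only [branchStep_eq, Pi.add_apply, pow_add, Finset.prod_mul_distrib]
lemma gen_succ' (p : T → PMF (T → ℕ)) (η : T → ℕ) (n : ℕ) :
    gen p η (n + 1) = (branchStep p η).bind fun ξ => gen p ξ n := by
  induction n generalizing η with
  | zero =>
    show (PMF.pure η).bind (branchStep p) = (branchStep p η).bind fun ξ => PMF.pure ξ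
    rw [PMF.pure_bind, PMF.bind_pure]
  | succ n ih =>
    show (gen p η (n+1)).bind (branchStep p) = _
    rw [ih, PMF.bind_bind]
    rfl

lemma bind_hom (K : (T → ℕ) → PMF (T → ℕ)) (hK : ∀ x y, K (x + y) = K x * K y)
    (μ ν : PMF (T → ℕ)) : (μ * ν).bind K = μ.bind K * ν.bind K := by
  show (addPMF μ ν).bind K = addPMF (μ.bind K) (ν.bind K)
  rw [addPMF_def, addPMF_def]
  simp only [PMF.bind_bind, PMF.pure_bind]
  refine congrArg (PMF.bind μ) (funext fun x => ?_)
  rw [PMF.bind_comm (K x) ν]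
  refine congrArg (PMF.bind ν) (funext fun y => ?_)
  rw [hK, mul_def, addPMF_def]

lemma gen_mul (p : T → PMF (T → ℕ)) (η ξ : T → ℕ) (n : ℕ) :
    gen p (η + ξ) n = gen p η n * gen p ξ n := by
  induction n with
  | zero =>
    show PMF.pure (η + ξ) = addPMF (PMF.pure η) (PMF.pure ξ)
    rw [addPMF_def, PMF.pure_bind, PMF.pure_bind]
  | succ n ih =>
    show (gen p (η + ξ) n).bind (branchStep p) = _
    rw [ih, bind_hom (branchStep p) (branchStep_add p)]
    rfl

lemma gen_zero_pop (p : T → PMF (T → ℕ)) (n : ℕ) : gen p 0 n = PMF.pure 0 := by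
  induction n with
  | zero => rfl
  | succ n ih =>
    show (gen p 0 n).bind (branchStep p) = _
    rw [ih, PMF.pure_bind, branchStep_zero]
    rfl

lemma gen_mono (p : T → PMF (T → ℕ)) (η : T → ℕ) : Monotone fun n => gen p η n 0 := by
  apply monotone_nat_of_le_succ
  intro n
  show gen p η n 0 ≤ ((gen p η n).bind (branchStep p)) 0
  rw [PMF.bind_apply]
  calc gen p η n 0 = gen p η n 0 * branchStep p 0 0 := by
        rw [branchStep_zero, one_def, PMF.pure_apply, if_pos rfl, mul_one]
    _ ≤ ∑' ξ, gen p η n ξ * branchStep p ξ 0 := ENNReal.le_tsum 0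

lemma mul_apply_zero (μ ν : PMF (T → ℕ)) : (μ * ν) 0 = μ 0 * ν 0 := by
  show (addPMF μ ν) 0 = μ 0 * ν 0
  rw [addPMF, PMF.bind_apply]
  rw [tsum_eq_single 0 ?_]
  · congr 1
    have : (fun y => (0 : T → ℕ) + y) = id := by funext y; simp
    rw [this, PMF.map_id]
  · intro x hx
    have hz : (PMF.map (fun y => x + y) ν) 0 = 0 := by
      rw [PMF.map_apply]
      refine ENNReal.tsum_eq_zero.mpr fun y => ?_
      rw [if_neg]
      intro h
      apply hx
      funext b
      have := congrFun h b
      simp only [Pi.zero_apply, Pi.add_apply] at this ⊢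
      omega
    rw [hz, mul_zero]

lemma ext_le_one (p : T → PMF (T → ℕ)) (η : T → ℕ) : extinctionProb p η ≤ 1 :=
  iSup_le fun n => PMF.coe_le_one _ _

lemma ext_zero (p : T → PMF (T → ℕ)) : extinctionProb p 0 = 1 := by
  refine le_antisymm (ext_le_one p 0) ?_
  refine le_trans ?_ (le_iSup _ 0)
  show (1 : ℝ≥0∞) ≤ (PMF.pure 0) 0
  rw [PMF.pure_apply, if_pos rfl]

lemma ext_mul_le (p : T → PMF (T → ℕ)) (η ξ : T → ℕ) :
    extinctionProb p η * extinctionProb p ξ ≤ extinctionProb p (η + ξ) := by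
  rw [extinctionProb, extinctionProb, ENNReal.iSup_mul]
  refine iSup_le fun n => ?_
  rw [ENNReal.mul_iSup]
  refine iSup_le fun m => ?_
  refine le_trans ?_ (le_iSup (fun k => gen p (η + ξ) k 0) (max n m))
  rw [gen_mul, mul_apply_zero]
  exact mul_le_mul' (gen_mono p η (le_max_left n m)) (gen_mono p ξ (le_max_right n m))

lemma ext_pile (p : T → PMF (T → ℕ)) (a : T) (n : ℕ) :
    extinctionProb p (single a) ^ n ≤
      extinctionProb p (fun b => if b = a then n else 0) := by
  induction n with
  | zero =>
    have : (fun b => if b = a then 0 else 0) = (0 : T → ℕ) := by funext b; simp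
    rw [this, pow_zero, ext_zero]
  | succ n ih =>
    have hsplit : (fun b => if b = a then n + 1 else 0)
        = single a + fun b => if b = a then n else 0 := by
      funext b
      by_cases hb : b = a <;> simp [single, hb]
      omega
    rw [hsplit, pow_succ, mul_comm]
    exact le_trans (mul_le_mul' le_rfl ih) (ext_mul_le p _ _)

lemma ext_prod (p : T → PMF (T → ℕ)) (η : T → ℕ) :
    ∏ a : T, extinctionProb p (single a) ^ η a ≤ extinctionProb p η := by
  have key : ∀ s : Finset T, ∏ a ∈ s, extinctionProb p (single a) ^ η a ≤
      extinctionProb p (fun b => if b ∈ s then η b else 0) := by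
    intro s
    induction s using Finset.induction_on with
    | empty =>
      have : (fun b => if b ∈ (∅ : Finset T) then η b else 0) = (0 : T → ℕ) := by
        funext b; simp
      rw [this, ext_zero, Finset.prod_empty]
    | @insert a s ha ih =>
      have hsplit : (fun b => if b ∈ insert a s then η b else 0)
          = (fun b => if b = a then η b else 0) + fun b => if b ∈ s then η b else 0 := by
        funext b
        by_cases hb : b = a
        · subst hb; simp [ha]
        · by_cases hbs : b ∈ s <;> simp [hb, hbs]
      rw [hsplit, Finset.prod_insert ha]
      refine le_trans (mul_le_mul' ?_ ih) (ext_mul_le p _ _)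
      have : (fun b => if b = a then η b else 0) = fun b => if b = a then η a else 0 := by
        funext b; by_cases hb : b = a <;> simp [hb]
      rw [this]
      exact ext_pile p a (η a)
  have := key Finset.univ
  simpa using this

lemma one_le_pow_add {x : ℝ≥0∞} (hx : x ≤ 1) (n : ℕ) :
    1 ≤ x ^ n + (n : ℝ≥0∞) * (1 - x) := by
  induction n with
  | zero => simp
  | succ n ih =>
    have key : x ^ n ≤ x ^ (n + 1) + (1 - x) := by
      calc x ^ n = x ^ n * (x + (1 - x)) := by
            rw [add_tsub_cancel_of_le hx, mul_one]
        _ = x ^ (n + 1) + x ^ n * (1 - x) := by rw [mul_add, pow_succ]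
        _ ≤ x ^ (n + 1) + 1 * (1 - x) := by
            exact add_le_add_right (mul_le_mul' (pow_le_one' hx n) le_rfl) _
        _ = x ^ (n + 1) + (1 - x) := by rw [one_mul]
    calc (1 : ℝ≥0∞) ≤ x ^ n + (n : ℝ≥0∞) * (1 - x) := ih
      _ ≤ (x ^ (n + 1) + (1 - x)) + (n : ℝ≥0∞) * (1 - x) := add_le_add_left key _
      _ = x ^ (n + 1) + ((n : ℕ) + 1 : ℝ≥0∞) * (1 - x) := by push_cast; ring
      _ = x ^ (n + 1) + ((n + 1 : ℕ) : ℝ≥0∞) * (1 - x) := by push_cast; ring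

lemma one_le_prod_add (s : Finset T) (g f : T → ℝ≥0∞)
    (hg : ∀ a, g a ≤ 1) (h : ∀ a, 1 ≤ g a + f a) :
    1 ≤ ∏ a ∈ s, g a + ∑ a ∈ s, f a := by
  induction s using Finset.induction_on with
  | empty => simp
  | @insert a s ha ih =>
    rw [Finset.prod_insert ha, Finset.sum_insert ha]
    set P := ∏ b ∈ s, g b with hPdef
    have hP : P ≤ 1 := Finset.prod_le_one' fun b _ => hg b
    have h1 : g a ≤ g a * P + (1 - P) := by
      calc g a = g a * P + g a * (1 - P) := by
            rw [← mul_add, add_tsub_cancel_of_le hP, mul_one]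
        _ ≤ g a * P + 1 * (1 - P) := add_le_add_right (mul_le_mul' (hg a) le_rfl) _
        _ = g a * P + (1 - P) := by rw [one_mul]
    have h2 : (1 : ℝ≥0∞) - P ≤ ∑ b ∈ s, f b := tsub_le_iff_left.mpr ih
    calc (1 : ℝ≥0∞) ≤ g a + f a := h a
      _ ≤ (g a * P + (1 - P)) + f a := add_le_add_left h1 _
      _ ≤ (g a * P + ∑ b ∈ s, f b) + f a := by
          exact add_le_add_left (add_le_add_right h2 _) _
      _ = g a * P + (f a + ∑ b ∈ s, f b) := by ring

lemma surv_le_sum (p : T → PMF (T → ℕ)) (η : T → ℕ) :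
    survivalProb p η ≤ ∑ a : T, (η a : ℝ≥0∞) * survivalProb p (single a) := by
  rw [survivalProb, tsub_le_iff_right]
  have key := one_le_prod_add Finset.univ
      (fun a => extinctionProb p (single a) ^ η a)
      (fun a => (η a : ℝ≥0∞) * survivalProb p (single a))
      (fun a => pow_le_one' (ext_le_one p (single a)) (η a))
      (fun a => one_le_pow_add (ext_le_one p (single a)) (η a))
  refine le_trans key ?_
  rw [add_comm]
  exact add_le_add_right (ext_prod p η) _

lemma tsum_ext_le (p : T → PMF (T → ℕ)) (a : T) :
    ∑' η : T → ℕ, p a η * extinctionProb p η ≤ extinctionProb p (single a) := by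
  calc ∑' η : T → ℕ, p a η * extinctionProb p η
      = ∑' η : T → ℕ, ⨆ n : ℕ, p a η * gen p η n 0 := by
        refine tsum_congr fun η => ?_
        rw [extinctionProb, ENNReal.mul_iSup]
    _ ≤ ⨆ n : ℕ, ∑' η : T → ℕ, p a η * gen p η n 0 := by
        rw [ENNReal.tsum_eq_iSup_sum]
        refine iSup_le fun s => ?_
        rw [ENNReal.finsetSum_iSup_of_monotone
          (f := fun η n => p a η * gen p η n 0)
          (fun η i j hij => mul_le_mul' le_rfl (gen_mono p η hij))]
        exact iSup_le fun n => le_trans (ENNReal.sum_le_tsum s) (le_iSup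
          (fun n => ∑' η : T → ℕ, p a η * gen p η n 0) n)
    _ ≤ extinctionProb p (single a) := by
        refine iSup_le fun n => ?_
        have hb : ((p a).bind fun ξ => gen p ξ n) = gen p (single a) (n + 1) := by
          rw [gen_succ', branchStep_single]
        calc ∑' η : T → ℕ, p a η * gen p η n 0
            = ((p a).bind fun ξ => gen p ξ n) 0 := (PMF.bind_apply _ _ _).symm
          _ = gen p (single a) (n + 1) 0 := by rw [hb]
          _ ≤ extinctionProb p (single a) := le_iSup (fun k => gen p (single a) k 0) (n + 1)

lemma surv_single_le (p : T → PMF (T → ℕ)) (a : T) :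
    survivalProb p (single a) ≤ ∑' η : T → ℕ, p a η * survivalProb p η := by
  rw [survivalProb, tsub_le_iff_right]
  calc (1 : ℝ≥0∞) = ∑' η : T → ℕ, p a η := (p a).tsum_coe.symm
    _ ≤ ∑' η : T → ℕ, p a η * (survivalProb p η + extinctionProb p η) := by
        refine ENNReal.tsum_le_tsum fun η => ?_
        conv_lhs => rw [← mul_one (p a η)]
        refine mul_le_mul' le_rfl ?_
        rw [survivalProb]
        exact le_tsub_add
    _ = (∑' η : T → ℕ, p a η * survivalProb p η)
        + ∑' η : T → ℕ, p a η * extinctionProb p η := by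
        simp_rw [mul_add]; exact ENNReal.tsum_add
    _ ≤ _ + extinctionProb p (single a) := add_le_add_right (tsum_ext_le p a) _

end Aux

section Aux2
variable {T : Type*} [Fintype T] [DecidableEq T]

lemma surv_single_le_mean (p : T → PMF (T → ℕ)) (a : T) :
    survivalProb p (single a) ≤
      ∑ b : T, meanMatrix p a b * survivalProb p (single b) := by
  refine le_trans (surv_single_le p a) ?_
  calc ∑' η : T → ℕ, p a η * survivalProb p η
      ≤ ∑' η : T → ℕ, p a η * ∑ b : T, (η b : ℝ≥0∞) * survivalProb p (single b) :=
        ENNReal.tsum_le_tsum fun η => mul_le_mul' le_rfl (surv_le_sum p η)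
    _ = ∑' η : T → ℕ, ∑ b : T, p a η * ((η b : ℝ≥0∞) * survivalProb p (single b)) := by
        refine tsum_congr fun η => ?_
        rw [Finset.mul_sum]
    _ = ∑ b : T, ∑' η : T → ℕ, p a η * ((η b : ℝ≥0∞) * survivalProb p (single b)) :=
        Summable.tsum_finsetSum fun b _ => ENNReal.summable
    _ = ∑ b : T, meanMatrix p a b * survivalProb p (single b) := by
        refine Finset.sum_congr rfl fun b _ => ?_
        simp_rw [← mul_assoc]
        rw [ENNReal.tsum_mul_right]
        rfl

lemma surv_pile_le (p : T → PMF (T → ℕ)) (a : T) (n : ℕ) :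
    survivalProb p (fun b => if b = a then n else 0) ≤
      (n : ℝ≥0∞) * survivalProb p (single a) := by
  rw [survivalProb, tsub_le_iff_right]
  calc (1 : ℝ≥0∞) ≤ extinctionProb p (single a) ^ n
        + (n : ℝ≥0∞) * (1 - extinctionProb p (single a)) :=
        one_le_pow_add (ext_le_one p (single a)) n
    _ ≤ extinctionProb p (fun b => if b = a then n else 0)
        + (n : ℝ≥0∞) * survivalProb p (single a) := by
        rw [add_comm, survivalProb]
        rw [add_comm ((n : ℝ≥0∞) * _)]
        exact add_le_add (ext_pile p a n) le_rfl
    _ = _ := by rw [add_comm]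

end Aux2

/-- **Lemma 3.3(b)** (de Lima–Szabó–Valesin). Let `Z` be a multi-type branching process
satisfying (⋆) and (P), let `a⋆` be a type, `I ⊆ 𝒯 \ {a⋆}`, and let `λ : 𝒯 → ℕ` with
`λ(a⋆) = 1` satisfy `P(Z survives ∣ Z_0 = e_a) ≤ P(Z survives ∣ Z_0 = λ(a)·e_{a⋆})`
for all `a`.  If
`Σ_{a ∉ I} M(a⋆,a)·λ(a) + Σ_{a ∈ I} Σ_b M(a⋆,a)·M(a,b)·λ(b) < 1`,
then `Z` started from `e_{a⋆}` goes extinct almost surely. -/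
theorem extinction_of_mean_lt_one {T : Type*} [Fintype T] [DecidableEq T]
    (p : T → PMF (T → ℕ)) (hstar : CondStar p) (hpos : CondPos p)
    (astar : T) (I : Finset T) (hI : astar ∉ I)
    (lam : T → ℕ) (hlam : lam astar = 1)
    (hmono : ∀ a : T,
      survivalProb p (single a) ≤
        survivalProb p (fun b => if b = astar then lam a else 0))
    (hmean : ∑ a ∈ Iᶜ, meanMatrix p astar a * (lam a : ℝ≥0∞) +
      ∑ a ∈ I, ∑ b : T, meanMatrix p astar a * meanMatrix p a b * (lam b : ℝ≥0∞) < 1) :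
    extinctionProb p (single astar) = 1 := by
  classical
  set S := survivalProb p (single astar) with hS
  set C := ∑ a ∈ Iᶜ, meanMatrix p astar a * (lam a : ℝ≥0∞) +
      ∑ a ∈ I, ∑ b : T, meanMatrix p astar a * meanMatrix p a b * (lam b : ℝ≥0∞) with hC
  -- every single-type survival prob is bounded by lam a * S
  have h1 : ∀ a : T, survivalProb p (single a) ≤ (lam a : ℝ≥0∞) * S :=
    fun a => le_trans (hmono a) (surv_pile_le p astar (lam a))
  -- main inequality S ≤ C * S
  have hmain : S ≤ C * S := by
    calc S ≤ ∑ b : T, meanMatrix p astar b * survivalProb p (single b) :=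
          surv_single_le_mean p astar
      _ = ∑ b ∈ Iᶜ, meanMatrix p astar b * survivalProb p (single b)
          + ∑ b ∈ I, meanMatrix p astar b * survivalProb p (single b) := by
          rw [Finset.sum_compl_add_sum]
      _ ≤ ∑ b ∈ Iᶜ, meanMatrix p astar b * (lam b : ℝ≥0∞) * S
          + ∑ b ∈ I, (∑ c : T, meanMatrix p astar b * meanMatrix p b c * (lam c : ℝ≥0∞)) * S := by
          refine add_le_add (Finset.sum_le_sum fun b _ => ?_)
            (Finset.sum_le_sum fun b _ => ?_)
          · rw [mul_assoc]
            exact mul_le_mul' le_rfl (h1 b)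
          · calc meanMatrix p astar b * survivalProb p (single b)
                ≤ meanMatrix p astar b
                  * ∑ c : T, meanMatrix p b c * survivalProb p (single c) :=
                  mul_le_mul' le_rfl (surv_single_le_mean p b)
              _ ≤ meanMatrix p astar b
                  * ∑ c : T, meanMatrix p b c * ((lam c : ℝ≥0∞) * S) :=
                  mul_le_mul' le_rfl (Finset.sum_le_sum fun c _ =>
                    mul_le_mul' le_rfl (h1 c))
              _ = (∑ c : T, meanMatrix p astar b * meanMatrix p b c * (lam c : ℝ≥0∞)) * S := by
                  rw [Finset.mul_sum, Finset.sum_mul]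
                  exact Finset.sum_congr rfl fun c _ => by ring
      _ = C * S := by
          rw [hC, add_mul, Finset.sum_mul, Finset.sum_mul]
  have hS0 : S = 0 := by
    by_contra hne
    have hSle : S ≤ 1 := by
      rw [hS, survivalProb]
      exact tsub_le_self
    have hlt : C * S < 1 * S := by
      exact ENNReal.mul_lt_mul_left hne (ne_top_of_le_ne_top ENNReal.one_ne_top hSle) hmean
    rw [one_mul] at hlt
    exact absurd (lt_of_le_of_lt hmain hlt) (lt_irrefl S)
  have hext : 1 ≤ extinctionProb p (single astar) := by
    have := hS0
    rw [hS, survivalProb, tsub_eq_zero_iff_le] at this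
    exact this
  exact le_antisymm (ext_le_one p (single astar)) hext
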